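/- For integers m ≥ 1, p ≥ 2 and r ≥ 0, the sum V_{m,r}(p) = Σ_{n=1}^∞ ζ_{n+r}^⋆({1}_m)/n^p satisfies V_{m,r}(p) = ζ^⋆(p, {1}_m) + Σ_{j=1}^m Σ_{1 ≤ i_j ≤ ⋯ ≤ i_1 ≤ r} Σ_{n=1}^∞ ζ_n^⋆({1}_{m−j}) / ( n^p (n+i_1)(n+i_2)⋯(n+i_j) ). -/

import Mathlib

open Finset

/-- Multiple harmonic number `ζ_n({1}_m)`:
`ζ_n({1}_m) = ∑_{n ≥ n₁ > n₂ > ⋯ > n_m ≥ 1} 1/(n₁ ⋯ n_m)`, with `ζ_n({1}_0) = 1`. -/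
noncomputable def mhn : ℕ → ℕ → ℝ
  | _, 0 => 1
  | n, m + 1 => ∑ k ∈ Finset.Icc 1 n, mhn (k - 1) m / (k : ℝ)

/-- Multiple harmonic star number `ζ_n^⋆({1}_m)`:
`ζ_n^⋆({1}_m) = ∑_{n ≥ n₁ ≥ n₂ ≥ ⋯ ≥ n_m ≥ 1} 1/(n₁ ⋯ n_m)`, with `ζ_n^⋆({1}_0) = 1`. -/
noncomputable def mhsn : ℕ → ℕ → ℝ
  | _, 0 => 1
  | n, m + 1 => ∑ k ∈ Finset.Icc 1 n, mhsn k m / (k : ℝ)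

/-- Multiple harmonic number with repeated real argument `p`: `ζ_n({p}_m)`. -/
noncomputable def mhnP (p : ℝ) : ℕ → ℕ → ℝ
  | _, 0 => 1
  | n, m + 1 => ∑ k ∈ Finset.Icc 1 n, mhnP p (k - 1) m / (k : ℝ) ^ p

/-- Multiple harmonic star number with repeated real argument `p`: `ζ_n^⋆({p}_m)`. -/
noncomputable def mhsnP (p : ℝ) : ℕ → ℕ → ℝ
  | _, 0 => 1
  | n, m + 1 => ∑ k ∈ Finset.Icc 1 n, mhsnP p k m / (k : ℝ) ^ p

/-- Generalized harmonic number `H_n^{(p)} = ∑_{j=1}^n 1/j^p`. -/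
noncomputable def genH (p n : ℕ) : ℝ := ∑ j ∈ Finset.Icc 1 n, 1 / (j : ℝ) ^ p

/-- Auxiliary: `hypAux m n k = h_n^{(m+1)}(k)` for `k ≥ 1` (peel off the weak outer indices). -/
noncomputable def hypAux : ℕ → ℕ → ℕ → ℝ
  | 0, n, k => mhn n k
  | m + 1, n, k => ∑ j ∈ Finset.Icc 1 n, hypAux m j k

/-- Generalized hyperharmonic number `h_n^{(m)}(k)`, with the convention
`h_n^{(m)}(0) = C(m+n-1, m-1)`. -/
noncomputable def gh (n m k : ℕ) : ℝ :=
  if k = 0 then (Nat.choose (m + n - 1) (m - 1) : ℝ) else hypAux (m - 1) n k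

/-- Unsigned Stirling number of the first kind, defined by the standard recurrence,
equivalently by `x(x+1)⋯(x+n-1) = ∑_{k=0}^n [n; k] xᵏ`. -/
def stir1 : ℕ → ℕ → ℕ
  | 0, 0 => 1
  | 0, _ + 1 => 0
  | _ + 1, 0 => 0
  | n + 1, k + 1 => stir1 n k + n * stir1 n (k + 1)

/-- Multiple zeta value `ζ(p, {1}_m)`. -/
noncomputable def mzv (p m : ℕ) : ℝ := ∑' n : ℕ, mhn n m / (n + 1 : ℝ) ^ p

/-- Multiple zeta star value `ζ^⋆(p, {1}_m)`. -/
noncomputable def mzvStar (p m : ℕ) : ℝ := ∑' n : ℕ, mhsn (n + 1) m / (n + 1 : ℝ) ^ p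

/-- Riemann zeta value `ζ(p) = ∑_{n=1}^∞ 1/n^p`. -/
noncomputable def rz (p : ℕ) : ℝ := ∑' n : ℕ, 1 / (n + 1 : ℝ) ^ p

/-- `U_{m,r}(p) = ∑_{n=1}^∞ ζ_{n+r}({1}_m)/n^p`. -/
noncomputable def Usum (m r p : ℕ) : ℝ := ∑' n : ℕ, mhn (n + 1 + r) m / (n + 1 : ℝ) ^ p

/-- Strictly decreasing `q`-fold sum `Ā_q(n) = ∑_{1 ≤ k_q < ⋯ < k₁ ≤ n} a_{k₁}⋯a_{k_q}`,
with `Ā_0(n) = 1` (so `Ā_q(n) = 0` when `n < q`). -/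
def sdSum {R : Type*} [Semiring R] (a : ℕ → R) : ℕ → ℕ → R
  | _, 0 => 1
  | n, q + 1 => ∑ k ∈ Finset.Icc 1 n, a k * sdSum a (k - 1) q

/-- Weakly decreasing `q`-fold sum `A_q(n) = ∑_{1 ≤ k_q ≤ ⋯ ≤ k₁ ≤ n} a_{k₁}⋯a_{k_q}`,
with `A_0(n) = 1`. -/
def wdSum {R : Type*} [Semiring R] (a : ℕ → R) : ℕ → ℕ → R
  | _, 0 => 1
  | n, q + 1 => ∑ k ∈ Finset.Icc 1 n, a k * wdSum a k q

lemma mhsn_succ (n m : ℕ) : mhsn n (m + 1) = ∑ k ∈ Finset.Icc 1 n, mhsn k m / (k : ℝ) := rfl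

/-- The index set of weakly decreasing tuples. -/
def T (j r : ℕ) : Finset (Fin j → ℕ) :=
  (Fintype.piFinset fun _ : Fin j => Finset.Icc 1 r).filter
    (fun i => ∀ a b : Fin j, a ≤ b → i b ≤ i a)

lemma sum_T_zero (r : ℕ) (g : (Fin 0 → ℕ) → ℝ) :
    ∑ i ∈ T 0 r, g i = g (fun a => a.elim0) := by
  have h : T 0 r = {fun a => a.elim0} := by
    apply Finset.eq_singleton_iff_unique_mem.mpr
    constructor
    · simp only [T, Finset.mem_filter, Fintype.mem_piFinset]
      exact ⟨fun a => a.elim0, fun a => a.elim0⟩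
    · intro f _; exact funext fun a => a.elim0
  rw [h, Finset.sum_singleton]

lemma step1 (m r n : ℕ) :
    mhsn (n + r) (m + 1) =
      mhsn n (m + 1) + ∑ i ∈ Icc 1 r, mhsn (n + i) m / ((n : ℝ) + (i : ℝ)) := by
  rw [mhsn_succ, mhsn_succ]
  have h0 : ∀ x : ℕ, Icc 1 x = Ioc 0 x := fun x => Finset.Icc_add_one_left_eq_Ioc 0 x
  rw [h0, h0, ← Finset.sum_Ioc_consecutive (fun k => mhsn k m / (k : ℝ))
    (Nat.zero_le n) (Nat.le_add_right n r)]
  congr 1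
  apply Finset.sum_nbij' (fun k => k - n) (fun i => n + i)
  · intro a ha; simp only [Finset.mem_Icc, Finset.mem_Ioc] at *; omega
  · intro a ha; simp only [Finset.mem_Icc, Finset.mem_Ioc] at *; omega
  · intro a ha; simp only [Finset.mem_Ioc] at ha; omega
  · intro a _; omega
  · intro a ha
    simp only [Finset.mem_Ioc] at ha
    have h : n + (a - n) = a := by omega
    rw [h, Nat.cast_sub (by omega : n ≤ a)]
    ring_nf

lemma cons_sum (r j : ℕ) (C : ℝ) (x : ℝ) :
    ∑ i ∈ T (j + 1) r, C / ∏ a : Fin (j + 1), (x + (i a : ℝ)) =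
      ∑ i₀ ∈ Icc 1 r, ∑ i' ∈ T j i₀,
        C / ((x + (i₀ : ℝ)) * ∏ a : Fin j, (x + (i' a : ℝ))) := by
  rw [Finset.sum_sigma']
  apply Finset.sum_nbij' (fun i => (⟨i 0, fun a => i a.succ⟩ : Σ i₀ : ℕ, Fin j → ℕ))
    (fun q => Fin.cons q.1 q.2)
  · intro i hi
    simp only [T, Finset.mem_filter, Fintype.mem_piFinset] at hi
    obtain ⟨hmem, hanti⟩ := hi
    simp only [Finset.mem_sigma, T, Finset.mem_filter, Fintype.mem_piFinset]
    refine ⟨hmem 0, ⟨fun a => ?_, fun a b hab => hanti a.succ b.succ (by simpa using hab)⟩⟩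
    · have h1 := hmem a.succ
      have h2 := hanti 0 a.succ (Fin.zero_le _)
      simp only [Finset.mem_Icc] at *
      omega
  · intro q hq
    simp only [Finset.mem_sigma, T, Finset.mem_filter, Fintype.mem_piFinset] at hq
    obtain ⟨hq1, hq2, hq3⟩ := hq
    simp only [T, Finset.mem_filter, Fintype.mem_piFinset]
    simp only [Finset.mem_Icc] at hq1
    constructor
    · intro a
      refine Fin.cases ?_ ?_ a
      · simp only [Fin.cons_zero, Finset.mem_Icc]; omega
      · intro b
        have := hq2 b
        simp only [Fin.cons_succ, Finset.mem_Icc] at *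
        omega
    · intro a b hab
      rcases Fin.eq_zero_or_eq_succ b with rfl | ⟨b', rfl⟩
      · have ha0 : a = 0 := Fin.le_zero_iff.mp hab
        subst ha0; exact le_refl _
      · rcases Fin.eq_zero_or_eq_succ a with rfl | ⟨a', rfl⟩
        · have := hq2 b'
          simp only [Fin.cons_succ, Fin.cons_zero, Finset.mem_Icc] at *
          omega
        · simp only [Fin.cons_succ]
          exact hq3 a' b' (by rwa [Fin.succ_le_succ_iff] at hab)
  · intro i _; exact Fin.cons_self_tail i
  · intro q _
    rcases q with ⟨q1, q2⟩
    rfl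
  · intro i _
    rw [Fin.prod_univ_succ]

lemma mhsn_zero' (n : ℕ) : mhsn n 0 = 1 := rfl

lemma key : ∀ (m r n : ℕ),
    mhsn (n + r) m =
      ∑ j ∈ range (m + 1), ∑ i ∈ T j r,
        mhsn n (m - j) / ∏ a : Fin j, ((n : ℝ) + (i a : ℝ)) := by
  intro m
  induction m with
  | zero =>
    intro r n
    rw [Finset.sum_range_one, sum_T_zero]
    simp [mhsn_zero']
  | succ m ih =>
    intro r n
    rw [step1, Finset.sum_range_succ']
    have hF0 : ∑ i ∈ T 0 r,
        mhsn n (m + 1 - 0) / ∏ a : Fin 0, ((n : ℝ) + (i a : ℝ)) = mhsn n (m + 1) := by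
      rw [sum_T_zero]; simp
    rw [hF0, add_comm]
    congr 1
    have hcong : ∀ i ∈ Icc 1 r,
        mhsn (n + i) m / ((n : ℝ) + (i : ℝ)) =
          ∑ j ∈ range (m + 1), ∑ i' ∈ T j i,
            mhsn n (m - j) / (((n : ℝ) + (i : ℝ)) * ∏ a : Fin j, ((n : ℝ) + (i' a : ℝ))) := by
      intro i _
      rw [ih i n, Finset.sum_div]
      refine Finset.sum_congr rfl fun j _ => ?_
      rw [Finset.sum_div]
      refine Finset.sum_congr rfl fun i' _ => ?_
      rw [div_div, mul_comm]
    rw [Finset.sum_congr rfl hcong, Finset.sum_comm]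
    refine Finset.sum_congr rfl fun j _ => ?_
    rw [show m + 1 - (j + 1) = m - j by omega]
    exact (cons_sum r j (mhsn n (m - j)) ((n : ℝ))).symm

lemma keyIcc (m r n : ℕ) :
    mhsn (n + r) m = mhsn n m + ∑ j ∈ Icc 1 m, ∑ i ∈ T j r,
        mhsn n (m - j) / ∏ a : Fin j, ((n : ℝ) + (i a : ℝ)) := by
  rw [key m r n, show range (m + 1) = insert 0 (Icc 1 m) by ext x; simp; omega,
    Finset.sum_insert (by simp)]
  congr 1
  rw [sum_T_zero]
  simp

lemma mhsn_nonneg' : ∀ (m n : ℕ), 0 ≤ mhsn n m := by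
  intro m
  induction m with
  | zero => intro n; simp [mhsn_zero']
  | succ m ih =>
    intro n
    rw [mhsn_succ]
    exact Finset.sum_nonneg fun k _ => div_nonneg (ih k) (by positivity)

lemma majorant_summable : Summable (fun n : ℕ => Real.sqrt ((n : ℝ) + 1) / ((n : ℝ) + 1) ^ 2) := by
  have base : Summable (fun n : ℕ => ((n : ℝ)) ^ (-(3 / 2) : ℝ)) :=
    Real.summable_nat_rpow.mpr (by norm_num)
  have h2 := (summable_nat_add_iff 1).mpr base
  apply h2.congr
  intro n
  have hc : ((n + 1 : ℕ) : ℝ) = (n : ℝ) + 1 := by push_cast; ring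
  have hx : (0 : ℝ) < (n : ℝ) + 1 := by positivity
  rw [hc, Real.sqrt_eq_rpow, ← Real.rpow_natCast ((n : ℝ) + 1) 2, ← Real.rpow_sub hx]
  norm_num

lemma invsqrt_sum : ∀ n : ℕ, ∑ k ∈ Icc 1 n, 1 / Real.sqrt k ≤ 2 * Real.sqrt n := by
  intro n
  induction n with
  | zero => simp
  | succ n ih =>
    rw [Finset.sum_Icc_succ_top (by omega : 1 ≤ n + 1)]
    have h1 : Real.sqrt (n + 1) > 0 := Real.sqrt_pos.2 (by positivity)
    have h4 : 1 / Real.sqrt (n + 1) ≤ 2 * Real.sqrt (n + 1) - 2 * Real.sqrt n := by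
      rw [div_le_iff₀ h1]
      nlinarith [sq_nonneg (Real.sqrt (n + 1) - Real.sqrt n), Real.sqrt_nonneg (n : ℝ),
        Real.sq_sqrt (by positivity : (0:ℝ) ≤ (n : ℝ)),
        Real.sq_sqrt (by positivity : (0:ℝ) ≤ (n : ℝ) + 1)]
    push_cast
    push_cast at ih
    linarith

lemma mhsn_le : ∀ (m n : ℕ), 1 ≤ n → mhsn n m ≤ 2 ^ m * Real.sqrt n := by
  intro m
  induction m with
  | zero =>
    intro n hn
    rw [mhsn_zero', pow_zero, one_mul]
    have := Real.sqrt_le_sqrt (show (1:ℝ) ≤ n by exact_mod_cast hn)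
    simpa using this
  | succ m ih =>
    intro n hn
    rw [mhsn_succ]
    have step : ∀ k ∈ Icc 1 n, mhsn k m / (k : ℝ) ≤ 2 ^ m * (1 / Real.sqrt k) := by
      intro k hk
      rw [Finset.mem_Icc] at hk
      have hk1 : (1 : ℝ) ≤ (k : ℝ) := by exact_mod_cast hk.1
      have hkpos : (0 : ℝ) < k := by linarith
      calc mhsn k m / (k : ℝ) ≤ (2 ^ m * Real.sqrt k) / (k : ℝ) :=
            div_le_div_of_nonneg_right (ih k hk.1) hkpos.le
      _ = 2 ^ m * (Real.sqrt k / k) := by ring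
      _ = 2 ^ m * (1 / Real.sqrt k) := by rw [Real.sqrt_div_self']
    calc ∑ k ∈ Icc 1 n, mhsn k m / (k : ℝ) ≤ ∑ k ∈ Icc 1 n, 2 ^ m * (1 / Real.sqrt k) :=
          Finset.sum_le_sum step
    _ = 2 ^ m * ∑ k ∈ Icc 1 n, 1 / Real.sqrt k := by rw [Finset.mul_sum]
    _ ≤ 2 ^ m * (2 * Real.sqrt n) := by
          apply mul_le_mul_of_nonneg_left (invsqrt_sum n) (by positivity)
    _ = 2 ^ (m + 1) * Real.sqrt n := by ring

lemma summable_aux {p : ℕ} (hp : 2 ≤ p) (k : ℕ) (d : ℕ → ℝ) (hd : ∀ n, 1 ≤ d n) :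
    Summable fun n : ℕ => mhsn (n + 1) k / (((n : ℝ) + 1) ^ p * d n) := by
  have hmaj : Summable (fun n : ℕ => 2 ^ k * (Real.sqrt ((n : ℝ) + 1) / ((n : ℝ) + 1) ^ 2)) :=
    majorant_summable.mul_left _
  refine Summable.of_nonneg_of_le (fun n => ?_) (fun n => ?_) hmaj
  · exact div_nonneg (mhsn_nonneg' k (n + 1))
      (mul_nonneg (by positivity) (le_trans zero_le_one (hd n)))
  · have h0 : (0:ℝ) ≤ (n:ℝ) := Nat.cast_nonneg n
    have hx1 : (1 : ℝ) ≤ (n : ℝ) + 1 := by linarith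
    have hnum : mhsn (n + 1) k ≤ 2 ^ k * Real.sqrt ((n : ℝ) + 1) := by
      have h := mhsn_le k (n + 1) (by omega)
      rwa [show ((n + 1 : ℕ) : ℝ) = (n : ℝ) + 1 by push_cast; ring] at h
    have hden : ((n : ℝ) + 1) ^ 2 ≤ ((n : ℝ) + 1) ^ p * d n := by
      calc ((n : ℝ) + 1) ^ 2 = ((n : ℝ) + 1) ^ 2 * 1 := by ring
      _ ≤ ((n : ℝ) + 1) ^ p * d n :=
          mul_le_mul (pow_le_pow_right₀ hx1 hp) (hd n) zero_le_one (by positivity)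
    calc mhsn (n + 1) k / (((n : ℝ) + 1) ^ p * d n)
        ≤ (2 ^ k * Real.sqrt ((n : ℝ) + 1)) / ((n : ℝ) + 1) ^ 2 :=
          div_le_div₀ (by positivity) hnum (by positivity) hden
      _ = 2 ^ k * (Real.sqrt ((n : ℝ) + 1) / ((n : ℝ) + 1) ^ 2) := by ring


/-- formula (4.7): for `m ≥ 1`, `p ≥ 2`, `r ≥ 0`,
`V_{m,r}(p) = ∑_{n=1}^∞ ζ_{n+r}^⋆({1}_m)/n^p = ζ^⋆(p,{1}_m)
  + ∑_{j=1}^m ∑_{1 ≤ i_j ≤ ⋯ ≤ i₁ ≤ r} ∑_{n=1}^∞ ζ_n^⋆({1}_{m-j})/(n^p (n+i₁)⋯(n+i_j))`. -/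
theorem V_sum_decomposition (m p r : ℕ) (hm : 1 ≤ m) (hp : 2 ≤ p) :
    ∑' n : ℕ, mhsn (n + 1 + r) m / (n + 1 : ℝ) ^ p =
      mzvStar p m +
        ∑ j ∈ Finset.Icc 1 m,
          ∑ i ∈ (Fintype.piFinset fun _ : Fin j => Finset.Icc 1 r).filter
              (fun i => ∀ a b : Fin j, a ≤ b → i b ≤ i a),
            ∑' n : ℕ,
              mhsn (n + 1) (m - j) /
                ((n + 1 : ℝ) ^ p * ∏ a : Fin j, ((n + 1 : ℝ) + (i a : ℝ))) := by
  show _ = mzvStar p m + ∑ j ∈ Icc 1 m, ∑ i ∈ T j r, ∑' n : ℕ,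
      mhsn (n + 1) (m - j) / ((n + 1 : ℝ) ^ p * ∏ a : Fin j, ((n + 1 : ℝ) + (i a : ℝ)))
  have hkeyn : ∀ n : ℕ, mhsn (n + 1 + r) m / ((n : ℝ) + 1) ^ p
      = mhsn (n + 1) m / ((n : ℝ) + 1) ^ p + ∑ j ∈ Icc 1 m, ∑ i ∈ T j r,
          mhsn (n + 1) (m - j) / (((n : ℝ) + 1) ^ p * ∏ a : Fin j, ((n : ℝ) + 1 + (i a : ℝ))) := by
    intro n
    have hk := keyIcc m r (n + 1)
    push_cast at hk
    rw [hk, add_div, Finset.sum_div]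
    congr 1
    refine Finset.sum_congr rfl fun j _ => ?_
    rw [Finset.sum_div]
    refine Finset.sum_congr rfl fun i _ => ?_
    rw [div_div, mul_comm]
  have hB : ∀ j ∈ Icc 1 m, ∀ i ∈ T j r, Summable (fun n : ℕ =>
      mhsn (n + 1) (m - j) / (((n : ℝ) + 1) ^ p * ∏ a : Fin j, ((n : ℝ) + 1 + (i a : ℝ)))) := by
    intro j _ i _
    apply summable_aux hp
    intro n
    calc (1 : ℝ) = ∏ _a : Fin j, (1 : ℝ) := by simp
      _ ≤ ∏ a : Fin j, ((n : ℝ) + 1 + (i a : ℝ)) := by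
          apply Finset.prod_le_prod (fun a _ => zero_le_one)
          intro a _
          have h1 : (0 : ℝ) ≤ (i a : ℝ) := Nat.cast_nonneg _
          have h2 : (0 : ℝ) ≤ (n : ℝ) := Nat.cast_nonneg _
          linarith
  have hA : Summable (fun n : ℕ => mhsn (n + 1) m / ((n : ℝ) + 1) ^ p) := by
    have := summable_aux hp (k := m) (d := fun _ => 1) (fun _ => le_refl 1)
    simpa using this
  have hS : Summable (fun n : ℕ => ∑ j ∈ Icc 1 m, ∑ i ∈ T j r,
      mhsn (n + 1) (m - j) / (((n : ℝ) + 1) ^ p * ∏ a : Fin j, ((n : ℝ) + 1 + (i a : ℝ)))) :=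
    summable_sum fun j hj => summable_sum fun i hi => hB j hj i hi
  calc ∑' n : ℕ, mhsn (n + 1 + r) m / ((n : ℝ) + 1) ^ p
      = ∑' n : ℕ, (mhsn (n + 1) m / ((n : ℝ) + 1) ^ p + ∑ j ∈ Icc 1 m, ∑ i ∈ T j r,
          mhsn (n + 1) (m - j) / (((n : ℝ) + 1) ^ p * ∏ a : Fin j, ((n : ℝ) + 1 + (i a : ℝ)))) :=
        tsum_congr hkeyn
    _ = (∑' n : ℕ, mhsn (n + 1) m / ((n : ℝ) + 1) ^ p) + ∑' n : ℕ, ∑ j ∈ Icc 1 m, ∑ i ∈ T j r,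
          mhsn (n + 1) (m - j) / (((n : ℝ) + 1) ^ p * ∏ a : Fin j, ((n : ℝ) + 1 + (i a : ℝ))) :=
        Summable.tsum_add hA hS
    _ = mzvStar p m + ∑ j ∈ Icc 1 m, ∑ i ∈ T j r, ∑' n : ℕ,
          mhsn (n + 1) (m - j) / (((n : ℝ) + 1) ^ p * ∏ a : Fin j, ((n : ℝ) + 1 + (i a : ℝ))) := by
        congr 1
        rw [Summable.tsum_finsetSum fun j hj => summable_sum fun i hi => hB j hj i hi]
        exact Finset.sum_congr rfl fun j hj => Summable.tsum_finsetSum (hB j hj)
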